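/- The theory T is rigid if and only if the monoid presentation ⟨G | u_i = v_i (i < m)⟩ does not prove u = v. -/

import Mathlib

/-- Terms of the theory `T`: unary symbols `g x` for each letter `x` of the alphabet `Fin N`,
an extra unary symbol `al` (written α), and a binary symbol `m`, in context `x_1, ..., x_n`. -/
inductive TmT (N : ℕ) : ℕ → Type
  | var {n} : Fin n → TmT N n
  | g {n} : Fin N → TmT N n → TmT N n
  | al {n} : TmT N n → TmT N n
  | m {n} : TmT N n → TmT N n → TmT N n

/-- A word `w` over the alphabet applied to a term as a composite of unary symbols. -/
def wApp {N n : ℕ} (w : List (Fin N)) (t : TmT N n) : TmT N n :=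
  w.foldr (fun x s => TmT.g x s) t

/-- Equational provability in the theory `T` with axioms `u_i(x1) = v_i(x1)` (for `i : Fin M`,
where `u_i = ur i`, `v_i = vr i`) and `m(uα(x1), x2) = m(vα(x2), x1)`, closed under
all substitution instances and congruence. -/
inductive ProvT {N : ℕ} (M : ℕ) (ur vr : Fin M → List (Fin N)) (u v : List (Fin N)) :
    {n : ℕ} → TmT N n → TmT N n → Prop
  | refl {n} (t : TmT N n) : ProvT M ur vr u v t t
  | symm {n} {s t : TmT N n} : ProvT M ur vr u v s t → ProvT M ur vr u v t s
  | trans {n} {s t w : TmT N n} :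
      ProvT M ur vr u v s t → ProvT M ur vr u v t w → ProvT M ur vr u v s w
  | congg {n} (x : Fin N) {s t : TmT N n} :
      ProvT M ur vr u v s t → ProvT M ur vr u v (.g x s) (.g x t)
  | congal {n} {s t : TmT N n} : ProvT M ur vr u v s t → ProvT M ur vr u v (.al s) (.al t)
  | congm {n} {a a' b b' : TmT N n} : ProvT M ur vr u v a a' → ProvT M ur vr u v b b' →
      ProvT M ur vr u v (.m a b) (.m a' b')
  | axu {n} (i : Fin M) (t : TmT N n) : ProvT M ur vr u v (wApp (ur i) t) (wApp (vr i) t)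
  | axm {n} (t₁ t₂ : TmT N n) :
      ProvT M ur vr u v (.m (wApp u (.al t₁)) t₂) (.m (wApp v (.al t₂)) t₁)

/-- Provability of word equations from the monoid presentation
`⟨ Fin N | ur i = vr i (i : Fin M) ⟩`: the congruence on the free monoid of words
over `Fin N` generated by the relations. -/
inductive MonProv {N M : ℕ} (ur vr : Fin M → List (Fin N)) :
    List (Fin N) → List (Fin N) → Prop
  | of (i : Fin M) : MonProv ur vr (ur i) (vr i)
  | refl (w : List (Fin N)) : MonProv ur vr w w
  | symm {a b} : MonProv ur vr a b → MonProv ur vr b a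
  | trans {a b c} : MonProv ur vr a b → MonProv ur vr b c → MonProv ur vr a c
  | mul {a b c d} : MonProv ur vr a b → MonProv ur vr c d → MonProv ur vr (a ++ c) (b ++ d)

/-- The left-to-right list of variable occurrences of a term of `T`. -/
def varListT {N n : ℕ} : TmT N n → List (Fin n)
  | .var i => [i]
  | .g _ t => varListT t
  | .al t => varListT t
  | .m a b => varListT a ++ varListT b

/-- A term of `T` in context `x_1, ..., x_n` is linear-regular if every variable
occurs exactly once. -/
def LinRegT {N n : ℕ} (t : TmT N n) : Prop := ∀ i : Fin n, (varListT t).count i = 1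

/-- Substitution of variables along a map of variables (`t(x_{σ(1)},...,x_{σ(n)})`). -/
def renameT {N n : ℕ} (σ : Fin n → Fin n) : TmT N n → TmT N n
  | .var i => .var (σ i)
  | .g x t => .g x (renameT σ t)
  | .al t => .al (renameT σ t)
  | .m a b => .m (renameT σ a) (renameT σ b)

/-- The theory `T` is rigid: no linear-regular term is provably equal to a nontrivial
permutation of its variables. -/
def RigidT {N : ℕ} (M : ℕ) (ur vr : Fin M → List (Fin N)) (u v : List (Fin N)) : Prop :=
  ∀ (n : ℕ) (t : TmT N n), LinRegT t → ∀ σ : Equiv.Perm (Fin n),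
    ProvT M ur vr u v t (renameT σ t) → σ = 1

section Aux

variable {N : ℕ}

theorem wApp_cons {n} (x : Fin N) (w : List (Fin N)) (t : TmT N n) :
    wApp (x :: w) t = .g x (wApp w t) := rfl

theorem wApp_append {n} (w w' : List (Fin N)) (t : TmT N n) :
    wApp (w ++ w') t = wApp w (wApp w' t) := List.foldr_append ..

/-- The head of the term is not a `g`. -/
def notG {n : ℕ} : TmT N n → Prop
  | .var _ => True
  | .al _ => True
  | .m _ _ => True
  | .g _ _ => False

/-- Word part of the canonical decomposition. -/
def decW {n : ℕ} : TmT N n → List (Fin N)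
  | .var _ => []
  | .al _ => []
  | .m _ _ => []
  | .g x t => x :: decW t

/-- Core part of the canonical decomposition. -/
def decC {n : ℕ} : TmT N n → TmT N n
  | .var i => .var i
  | .al t => .al t
  | .m a b => .m a b
  | .g _ t => decC t

theorem dec_spec {n} (t : TmT N n) : wApp (decW t) (decC t) = t ∧ notG (decC t) := by
  induction t with
  | var i => exact ⟨rfl, trivial⟩
  | al t _ => exact ⟨rfl, trivial⟩
  | m a b _ _ => exact ⟨rfl, trivial⟩
  | g x t ih => exact ⟨by rw [decW, decC, wApp_cons, ih.1], by rw [decC]; exact ih.2⟩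

theorem dec_wApp {n} (w : List (Fin N)) (r : TmT N n) (hr : notG r) :
    decW (wApp w r) = w ∧ decC (wApp w r) = r := by
  induction w with
  | nil =>
    cases r with
    | g x t => exact hr.elim
    | var i => exact ⟨rfl, rfl⟩
    | al t => exact ⟨rfl, rfl⟩
    | m a b => exact ⟨rfl, rfl⟩
  | cons x w ih => exact ⟨by rw [wApp_cons, decW, ih.1], by rw [wApp_cons, decC]; exact ih.2⟩

theorem wApp_core_inj {n} {w w' : List (Fin N)} {r r' : TmT N n}
    (hr : notG r) (hr' : notG r') (h : wApp w r = wApp w' r') : w = w' ∧ r = r' := by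
  have h1 := dec_wApp w r hr
  have h2 := dec_wApp w' r' hr'
  rw [h] at h1
  exact ⟨h1.1.symm.trans h2.1, h1.2.symm.trans h2.2⟩

/-- Size of a term. -/
def tsize {n : ℕ} : TmT N n → ℕ
  | .var _ => 1
  | .al t => tsize t + 1
  | .m a b => tsize a + tsize b + 1
  | .g _ t => tsize t + 1

theorem tsize_decC {n} (t : TmT N n) : tsize (decC t) ≤ tsize t := by
  induction t with
  | var i => exact le_refl _
  | al t _ => exact le_refl _
  | m a b _ _ => exact le_refl _
  | g x t ih => rw [decC, tsize]; omega

theorem varListT_wApp {n} (w : List (Fin N)) (t : TmT N n) :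
    varListT (wApp w t) = varListT t := by
  induction w with
  | nil => rfl
  | cons x w ih => rw [wApp_cons, varListT, ih]

theorem renameT_wApp {n} (σ : Fin n → Fin n) (w : List (Fin N)) (t : TmT N n) :
    renameT σ (wApp w t) = wApp w (renameT σ t) := by
  induction w with
  | nil => rfl
  | cons x w ih => rw [wApp_cons, wApp_cons, renameT, ih]

end Aux
/-- Fuel-indexed characterization of provable equality in `T`. -/
inductive RT {N : ℕ} (M : ℕ) (ur vr : Fin M → List (Fin N)) (u v : List (Fin N)) :
    ℕ → {n : ℕ} → TmT N n → TmT N n → Prop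
  | var {k n} {w w' : List (Fin N)} (i : Fin n) (h : MonProv ur vr w w') :
      RT M ur vr u v k (wApp w (.var i)) (wApp w' (.var i))
  | al {k n} {w w' : List (Fin N)} {s s' : TmT N n} (h : MonProv ur vr w w')
      (hs : RT M ur vr u v k s s') :
      RT M ur vr u v (k+1) (wApp w (.al s)) (wApp w' (.al s'))
  | m0 {k n} {w w' : List (Fin N)} {a a' b b' : TmT N n} (h : MonProv ur vr w w')
      (ha : RT M ur vr u v k a a') (hb : RT M ur vr u v k b b') :
      RT M ur vr u v (k+1) (wApp w (.m a b)) (wApp w' (.m a' b'))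
  | mt {k n} {w w' : List (Fin N)} {a b a' b' : TmT N n} (h : MonProv ur vr w w')
      (ha : RT M ur vr u v k a (wApp u (.al b')))
      (ha' : RT M ur vr u v k a' (wApp v (.al b))) :
      RT M ur vr u v (k+1) (wApp w (.m a b)) (wApp w' (.m a' b'))
  | mt' {k n} {w w' : List (Fin N)} {a b a' b' : TmT N n} (h : MonProv ur vr w w')
      (ha : RT M ur vr u v k a (wApp v (.al b')))
      (ha' : RT M ur vr u v k a' (wApp u (.al b))) :
      RT M ur vr u v (k+1) (wApp w (.m a b)) (wApp w' (.m a' b'))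

section RTBasic

variable {N M : ℕ} {ur vr : Fin M → List (Fin N)} {u v : List (Fin N)}

theorem RT_mono {k n} {s t : TmT N n} (h : RT M ur vr u v k s t) :
    RT M ur vr u v (k+1) s t := by
  induction h with
  | var i h => exact .var i h
  | al h _ ih => exact .al h ih
  | m0 h _ _ iha ihb => exact .m0 h iha ihb
  | mt h _ _ iha iha' => exact .mt h iha iha'
  | mt' h _ _ iha iha' => exact .mt' h iha iha'

theorem RT_le {k k' n} {s t : TmT N n} (hk : k ≤ k') (h : RT M ur vr u v k s t) :
    RT M ur vr u v k' s t := by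
  induction hk with
  | refl => exact h
  | step _ ih => exact RT_mono ih

theorem RT_prepend {k n} {w1 w1' : List (Fin N)} {s t : TmT N n}
    (hw : MonProv ur vr w1 w1') (h : RT M ur vr u v k s t) :
    RT M ur vr u v k (wApp w1 s) (wApp w1' t) := by
  cases h with
  | var i h => rw [← wApp_append, ← wApp_append]; exact .var i (hw.mul h)
  | al h hs => rw [← wApp_append, ← wApp_append]; exact .al (hw.mul h) hs
  | m0 h ha hb => rw [← wApp_append, ← wApp_append]; exact .m0 (hw.mul h) ha hb
  | mt h ha ha' => rw [← wApp_append, ← wApp_append]; exact .mt (hw.mul h) ha ha'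
  | mt' h ha ha' => rw [← wApp_append, ← wApp_append]; exact .mt' (hw.mul h) ha ha'

theorem RT_g {k n} (x : Fin N) {s t : TmT N n} (h : RT M ur vr u v k s t) :
    RT M ur vr u v k (.g x s) (.g x t) :=
  RT_prepend (w1 := [x]) (w1' := [x]) (.refl [x]) h

theorem RT_refl {n} (t : TmT N n) : ∃ k, RT M ur vr u v k t t := by
  induction t with
  | var i => exact ⟨0, .var (w := []) (w' := []) i (.refl [])⟩
  | g x t ih => obtain ⟨k, h⟩ := ih; exact ⟨k, RT_g x h⟩
  | al t ih => obtain ⟨k, h⟩ := ih; exact ⟨k+1, .al (w := []) (w' := []) (.refl []) h⟩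
  | m a b iha ihb =>
    obtain ⟨k1, h1⟩ := iha; obtain ⟨k2, h2⟩ := ihb
    exact ⟨max k1 k2 + 1, .m0 (w := []) (w' := []) (.refl [])
      (RT_le (le_max_left _ _) h1) (RT_le (le_max_right _ _) h2)⟩

theorem RT_symm {k n} {s t : TmT N n} (h : RT M ur vr u v k s t) :
    RT M ur vr u v k t s := by
  induction h with
  | var i h => exact .var i h.symm
  | al h _ ih => exact .al h.symm ih
  | m0 h _ _ iha ihb => exact .m0 h.symm iha ihb
  | mt h ha ha' _ _ => exact .mt' h.symm ha' ha
  | mt' h ha ha' _ _ => exact .mt h.symm ha' ha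

end RTBasic
section RTInv

variable {N M : ℕ} {ur vr : Fin M → List (Fin N)} {u v : List (Fin N)}

theorem RT_cases {k n} {s t : TmT N n} (h : RT M ur vr u v k s t) :
    (∃ (w w' : List (Fin N)) (i : Fin n), MonProv ur vr w w' ∧ s = wApp w (.var i) ∧ t = wApp w' (.var i)) ∨
    (∃ w w' s1 s1' k', k = k' + 1 ∧ MonProv ur vr w w' ∧ RT M ur vr u v k' s1 s1' ∧
      s = wApp w (.al s1) ∧ t = wApp w' (.al s1')) ∨
    (∃ w w' a b a' b' k', k = k' + 1 ∧ MonProv ur vr w w' ∧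
      s = wApp w (.m a b) ∧ t = wApp w' (.m a' b') ∧
      ((RT M ur vr u v k' a a' ∧ RT M ur vr u v k' b b') ∨
       (RT M ur vr u v k' a (wApp u (.al b')) ∧ RT M ur vr u v k' a' (wApp v (.al b))) ∨
       (RT M ur vr u v k' a (wApp v (.al b')) ∧ RT M ur vr u v k' a' (wApp u (.al b))))) := by
  cases h with
  | var i hw => exact Or.inl ⟨_, _, i, hw, rfl, rfl⟩
  | al hw hs => exact Or.inr (Or.inl ⟨_, _, _, _, _, rfl, hw, hs, rfl, rfl⟩)
  | m0 hw ha hb =>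
    exact Or.inr (Or.inr ⟨_, _, _, _, _, _, _, rfl, hw, rfl, rfl, Or.inl ⟨ha, hb⟩⟩)
  | mt hw ha ha' =>
    exact Or.inr (Or.inr ⟨_, _, _, _, _, _, _, rfl, hw, rfl, rfl, Or.inr (Or.inl ⟨ha, ha'⟩)⟩)
  | mt' hw ha ha' =>
    exact Or.inr (Or.inr ⟨_, _, _, _, _, _, _, rfl, hw, rfl, rfl, Or.inr (Or.inr ⟨ha, ha'⟩)⟩)

theorem RT_inv_var1 {k n} {w : List (Fin N)} {i : Fin n} {t : TmT N n}
    (h : RT M ur vr u v k (wApp w (.var i)) t) :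
    ∃ w', t = wApp w' (.var i) ∧ MonProv ur vr w w' := by
  rcases RT_cases h with ⟨w1, w1', j, hw, hs, ht⟩ | ⟨w1, w1', s1, s1', k', _, hw, _, hs, ht⟩ |
    ⟨w1, w1', a, b, a', b', k', _, hw, hs, ht, _⟩
  · obtain ⟨hww, hcc⟩ := wApp_core_inj (by trivial) (by trivial) hs
    cases hcc; exact ⟨w1', ht, hww ▸ hw⟩
  · exact absurd (wApp_core_inj (by trivial) (by trivial) hs).2 (fun hc => by cases hc)
  · exact absurd (wApp_core_inj (by trivial) (by trivial) hs).2 (fun hc => by cases hc)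

theorem RT_inv_al1 {k n} {w : List (Fin N)} {s : TmT N n} {t : TmT N n}
    (h : RT M ur vr u v k (wApp w (.al s)) t) :
    ∃ w' s' k', t = wApp w' (.al s') ∧ MonProv ur vr w w' ∧ k' < k ∧
      RT M ur vr u v k' s s' := by
  rcases RT_cases h with ⟨w1, w1', j, hw, hs, ht⟩ | ⟨w1, w1', s1, s1', k', hk, hw, h1, hs, ht⟩ |
    ⟨w1, w1', a, b, a', b', k', _, hw, hs, ht, _⟩
  · exact absurd (wApp_core_inj (by trivial) (by trivial) hs).2 (fun hc => by cases hc)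
  · obtain ⟨hww, hcc⟩ := wApp_core_inj (by trivial) (by trivial) hs
    cases hcc; exact ⟨w1', s1', k', ht, hww ▸ hw, by omega, h1⟩
  · exact absurd (wApp_core_inj (by trivial) (by trivial) hs).2 (fun hc => by cases hc)

theorem RT_inv_m1 {k n} {w : List (Fin N)} {a b : TmT N n} {t : TmT N n}
    (h : RT M ur vr u v k (wApp w (.m a b)) t) :
    ∃ w' a' b' k', t = wApp w' (.m a' b') ∧ MonProv ur vr w w' ∧ k' < k ∧
      ((RT M ur vr u v k' a a' ∧ RT M ur vr u v k' b b') ∨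
       (RT M ur vr u v k' a (wApp u (.al b')) ∧ RT M ur vr u v k' a' (wApp v (.al b))) ∨
       (RT M ur vr u v k' a (wApp v (.al b')) ∧ RT M ur vr u v k' a' (wApp u (.al b)))) := by
  rcases RT_cases h with ⟨w1, w1', j, hw, hs, ht⟩ | ⟨w1, w1', s1, s1', k', hk, hw, h1, hs, ht⟩ |
    ⟨w1, w1', a1, b1, a1', b1', k', hk, hw, hs, ht, hcase⟩
  · exact absurd (wApp_core_inj (by trivial) (by trivial) hs).2 (fun hc => by cases hc)
  · exact absurd (wApp_core_inj (by trivial) (by trivial) hs).2 (fun hc => by cases hc)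
  · obtain ⟨hww, hcc⟩ := wApp_core_inj (by trivial) (by trivial) hs
    cases hcc; exact ⟨w1', a1', b1', k', ht, hww ▸ hw, by omega, hcase⟩

theorem RT_inv_al2 {k n} {w w' : List (Fin N)} {s s' : TmT N n}
    (h : RT M ur vr u v k (wApp w (.al s)) (wApp w' (.al s'))) :
    MonProv ur vr w w' ∧ ∃ k', k' < k ∧ RT M ur vr u v k' s s' := by
  obtain ⟨w2, s2, k', heq, hw, hk, hs⟩ := RT_inv_al1 h
  obtain ⟨hww, hcc⟩ := wApp_core_inj (by trivial) (by trivial) heq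
  cases hcc; exact ⟨hww ▸ hw, k', hk, hs⟩

theorem RT_inv_m2 {k n} {w w' : List (Fin N)} {a b a' b' : TmT N n}
    (h : RT M ur vr u v k (wApp w (.m a b)) (wApp w' (.m a' b'))) :
    MonProv ur vr w w' ∧ ∃ k', k' < k ∧
      ((RT M ur vr u v k' a a' ∧ RT M ur vr u v k' b b') ∨
       (RT M ur vr u v k' a (wApp u (.al b')) ∧ RT M ur vr u v k' a' (wApp v (.al b))) ∨
       (RT M ur vr u v k' a (wApp v (.al b')) ∧ RT M ur vr u v k' a' (wApp u (.al b)))) := by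
  obtain ⟨w2, a2, b2, k', heq, hw, hk, hcase⟩ := RT_inv_m1 h
  obtain ⟨hww, hcc⟩ := wApp_core_inj (by trivial) (by trivial) heq
  cases hcc; exact ⟨hww ▸ hw, k', hk, hcase⟩

end RTInv
section RTTrans

variable {N M : ℕ} {ur vr : Fin M → List (Fin N)} {u v : List (Fin N)}

theorem RT_trans_aux (hn : ¬ MonProv ur vr u v) :
    ∀ K : ℕ, ∀ {n : ℕ} (k1 k2 : ℕ) {t1 t2 t3 : TmT N n}, k1 + k2 ≤ K →
      RT M ur vr u v k1 t1 t2 → RT M ur vr u v k2 t2 t3 → RT M ur vr u v K t1 t3 := by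
  intro K
  induction K using Nat.strong_induction_on with
  | _ K IH =>
  intro n k1 k2 t1 t2 t3 hK h12 h23
  cases h12 with
  | var i hw =>
    obtain ⟨w2, rfl, hw2⟩ := RT_inv_var1 h23
    exact .var i (hw.trans hw2)
  | @al k _ w w' s s' hw hs =>
    obtain ⟨w2, s2, k2', rfl, hw2, hk2, hs2⟩ := RT_inv_al1 h23
    have h3 : RT M ur vr u v (k + k2') s s2 := IH _ (by omega) _ _ le_rfl hs hs2
    exact RT_le (by omega) (.al (hw.trans hw2) h3)
  | @m0 k _ w w' a a' b b' hw ha hb =>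
    obtain ⟨w2, a2, b2, k2', rfl, hw2, hk2, hcase⟩ := RT_inv_m1 h23
    rcases hcase with ⟨ha2, hb2⟩ | ⟨ha2, hb2⟩ | ⟨ha2, hb2⟩
    · have p1 : RT M ur vr u v (k + k2') a a2 := IH _ (by omega) _ _ le_rfl ha ha2
      have p2 : RT M ur vr u v (k + k2') b b2 := IH _ (by omega) _ _ le_rfl hb hb2
      exact RT_le (by omega) (.m0 (hw.trans hw2) p1 p2)
    · -- second is a twist: build a twist
      have p1 : RT M ur vr u v (k + k2') a (wApp u (.al b2)) := IH _ (by omega) _ _ le_rfl ha ha2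
      have q : RT M ur vr u v (k + 1) (wApp v (.al b')) (wApp v (.al b)) :=
        .al (.refl v) (RT_symm hb)
      have p2 : RT M ur vr u v (k2' + (k + 1)) a2 (wApp v (.al b)) :=
        IH _ (by omega) _ _ le_rfl hb2 q
      exact RT_le (by omega) (.mt (hw.trans hw2)
        (RT_le (by omega) p1 : RT M ur vr u v (k + k2' + 1) _ _)
        (RT_le (by omega) p2))
    · have p1 : RT M ur vr u v (k + k2') a (wApp v (.al b2)) := IH _ (by omega) _ _ le_rfl ha ha2
      have q : RT M ur vr u v (k + 1) (wApp u (.al b')) (wApp u (.al b)) :=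
        .al (.refl u) (RT_symm hb)
      have p2 : RT M ur vr u v (k2' + (k + 1)) a2 (wApp u (.al b)) :=
        IH _ (by omega) _ _ le_rfl hb2 q
      exact RT_le (by omega) (.mt' (hw.trans hw2)
        (RT_le (by omega) p1 : RT M ur vr u v (k + k2' + 1) _ _)
        (RT_le (by omega) p2))
  | @mt k _ w w' a b a' b' hw ha ha' =>
    obtain ⟨w2, a2, b2, k2', rfl, hw2, hk2, hcase⟩ := RT_inv_m1 h23
    rcases hcase with ⟨ha2, hb2⟩ | ⟨ha2, hb2⟩ | ⟨ha2, hb2⟩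
    · -- first is a twist, second straight: result is a twist
      have q : RT M ur vr u v (k2' + 1) (wApp u (.al b')) (wApp u (.al b2)) :=
        .al (.refl u) hb2
      have p1 : RT M ur vr u v (k + (k2' + 1)) a (wApp u (.al b2)) :=
        IH _ (by omega) _ _ le_rfl ha q
      have p2 : RT M ur vr u v (k2' + k) a2 (wApp v (.al b)) :=
        IH _ (by omega) _ _ le_rfl (RT_symm ha2) ha'
      exact RT_le (by omega) (.mt (hw.trans hw2) p1
        (RT_le (by omega) p2 : RT M ur vr u v (k + (k2' + 1)) _ _))
    · -- twist then twist (same orientation): impossible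
      have c : RT M ur vr u v (k + k2') (wApp v (.al b)) (wApp u (.al b2)) :=
        IH _ (by omega) _ _ le_rfl (RT_symm ha') ha2
      exact absurd (RT_inv_al2 c).1.symm hn
    · -- twist then reverse twist: straight
      have paa : RT M ur vr u v (k + k2') a a2 := IH _ (by omega) _ _ le_rfl ha (RT_symm hb2)
      have c : RT M ur vr u v (k + k2') (wApp v (.al b)) (wApp v (.al b2)) :=
        IH _ (by omega) _ _ le_rfl (RT_symm ha') ha2
      obtain ⟨-, kb, hkb, pbb⟩ := RT_inv_al2 c
      exact RT_le (by omega) (.m0 (hw.trans hw2) paa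
        (RT_le (by omega) pbb : RT M ur vr u v (k + k2') _ _))
  | @mt' k _ w w' a b a' b' hw ha ha' =>
    obtain ⟨w2, a2, b2, k2', rfl, hw2, hk2, hcase⟩ := RT_inv_m1 h23
    rcases hcase with ⟨ha2, hb2⟩ | ⟨ha2, hb2⟩ | ⟨ha2, hb2⟩
    · have q : RT M ur vr u v (k2' + 1) (wApp v (.al b')) (wApp v (.al b2)) :=
        .al (.refl v) hb2
      have p1 : RT M ur vr u v (k + (k2' + 1)) a (wApp v (.al b2)) :=
        IH _ (by omega) _ _ le_rfl ha q
      have p2 : RT M ur vr u v (k2' + k) a2 (wApp u (.al b)) :=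
        IH _ (by omega) _ _ le_rfl (RT_symm ha2) ha'
      exact RT_le (by omega) (.mt' (hw.trans hw2) p1
        (RT_le (by omega) p2 : RT M ur vr u v (k + (k2' + 1)) _ _))
    · -- reverse twist then twist: straight
      have paa : RT M ur vr u v (k + k2') a a2 := IH _ (by omega) _ _ le_rfl ha (RT_symm hb2)
      have c : RT M ur vr u v (k + k2') (wApp u (.al b)) (wApp u (.al b2)) :=
        IH _ (by omega) _ _ le_rfl (RT_symm ha') ha2
      obtain ⟨-, kb, hkb, pbb⟩ := RT_inv_al2 c
      exact RT_le (by omega) (.m0 (hw.trans hw2) paa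
        (RT_le (by omega) pbb : RT M ur vr u v (k + k2') _ _))
    · -- reverse twist then reverse twist: impossible
      have c : RT M ur vr u v (k + k2') (wApp u (.al b)) (wApp v (.al b2)) :=
        IH _ (by omega) _ _ le_rfl (RT_symm ha') ha2
      exact absurd (RT_inv_al2 c).1 hn

theorem RT_trans (hn : ¬ MonProv ur vr u v) {n : ℕ} {k1 k2 : ℕ} {t1 t2 t3 : TmT N n}
    (h12 : RT M ur vr u v k1 t1 t2) (h23 : RT M ur vr u v k2 t2 t3) :
    RT M ur vr u v (k1 + k2) t1 t3 :=
  RT_trans_aux hn _ _ _ le_rfl h12 h23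

end RTTrans
section RTMore

variable {N M : ℕ} {ur vr : Fin M → List (Fin N)} {u v : List (Fin N)}

theorem RT_rename {k n} (σ : Fin n → Fin n) {s t : TmT N n} (h : RT M ur vr u v k s t) :
    RT M ur vr u v k (renameT σ s) (renameT σ t) := by
  induction h with
  | var i hw =>
    rw [renameT_wApp, renameT_wApp]
    exact .var (σ i) hw
  | al hw _ ih =>
    rw [renameT_wApp, renameT_wApp]
    exact .al hw (ih σ)
  | m0 hw _ _ iha ihb =>
    rw [renameT_wApp, renameT_wApp]
    exact .m0 hw (iha σ) (ihb σ)
  | mt hw _ _ iha iha' =>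
    rw [renameT_wApp, renameT_wApp]
    have h1 := iha σ; have h2 := iha' σ
    rw [renameT_wApp] at h1 h2
    exact .mt hw h1 h2
  | mt' hw _ _ iha iha' =>
    rw [renameT_wApp, renameT_wApp]
    have h1 := iha σ; have h2 := iha' σ
    rw [renameT_wApp] at h1 h2
    exact .mt' hw h1 h2

theorem provT_RT (hn : ¬ MonProv ur vr u v) {n} {s t : TmT N n}
    (h : ProvT M ur vr u v s t) : ∃ k, RT M ur vr u v k s t := by
  induction h with
  | refl t => exact RT_refl t
  | symm _ ih => obtain ⟨k, h⟩ := ih; exact ⟨k, RT_symm h⟩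
  | trans _ _ ih1 ih2 =>
    obtain ⟨k1, h1⟩ := ih1; obtain ⟨k2, h2⟩ := ih2
    exact ⟨k1 + k2, RT_trans hn h1 h2⟩
  | congg x _ ih => obtain ⟨k, h⟩ := ih; exact ⟨k, RT_g x h⟩
  | congal _ ih => obtain ⟨k, h⟩ := ih; exact ⟨k + 1, .al (w := []) (w' := []) (.refl []) h⟩
  | congm _ _ ih1 ih2 =>
    obtain ⟨k1, h1⟩ := ih1; obtain ⟨k2, h2⟩ := ih2
    exact ⟨max k1 k2 + 1, .m0 (w := []) (w' := []) (.refl [])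
      (RT_le (le_max_left _ _) h1) (RT_le (le_max_right _ _) h2)⟩
  | axu i t =>
    obtain ⟨k, h⟩ := RT_refl (M := M) (ur := ur) (vr := vr) (u := u) (v := v) t
    exact ⟨k, RT_prepend (.of i) h⟩
  | axm t₁ t₂ =>
    obtain ⟨k1, h1⟩ := RT_refl (M := M) (ur := ur) (vr := vr) (u := u) (v := v)
      (wApp u (.al t₁))
    obtain ⟨k2, h2⟩ := RT_refl (M := M) (ur := ur) (vr := vr) (u := u) (v := v)
      (wApp v (.al t₂))
    exact ⟨max k1 k2 + 1, .mt (w := []) (w' := []) (.refl [])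
      (RT_le (le_max_left _ _) h1) (RT_le (le_max_right _ _) h2)⟩

theorem RT_fix (hn : ¬ MonProv ur vr u v) {n : ℕ} (σ : Equiv.Perm (Fin n)) :
    ∀ Sz (r : TmT N n), tsize r ≤ Sz → notG r →
      ∀ (w w' : List (Fin N)) (k : ℕ),
        RT M ur vr u v k (wApp w r) (wApp w' (renameT σ r)) →
        ∀ i ∈ varListT r, σ i = i := by
  intro Sz
  induction Sz with
  | zero =>
    intro r hsz
    exfalso
    cases r <;> simp [tsize] at hsz
  | succ Sz IH =>
    intro r hsz hg w w' k h i hi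
    cases r with
    | g x r => exact hg.elim
    | var j =>
      simp only [renameT] at h
      obtain ⟨w2, heq, -⟩ := RT_inv_var1 h
      obtain ⟨-, hcc⟩ := wApp_core_inj (by trivial) (by trivial) heq
      have hj : σ j = j := by injection hcc
      simp only [varListT, List.mem_singleton] at hi
      rw [hi]; exact hj
    | al s =>
      simp only [renameT] at h
      obtain ⟨-, k', -, hs⟩ := RT_inv_al2 h
      obtain ⟨hdec, hng⟩ := dec_spec s
      have hs' : RT M ur vr u v k' (wApp (decW s) (decC s))
          (wApp (decW s) (renameT σ (decC s))) := by
        rw [← renameT_wApp, hdec]; exact hs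
      have hsz' : tsize (decC s) ≤ Sz := by
        have h1 := tsize_decC s
        simp only [tsize] at hsz
        omega
      have hi' : i ∈ varListT (decC s) := by
        have hv : varListT (decC s) = varListT s :=
          (varListT_wApp (decW s) (decC s)).symm.trans (congrArg varListT hdec)
        rw [hv]
        simpa [varListT] using hi
      exact IH (decC s) hsz' hng _ _ _ hs' i hi'
    | m a b =>
      simp only [renameT] at h
      obtain ⟨-, k', -, hcase⟩ := RT_inv_m2 h
      have hsza : tsize (decC a) ≤ Sz := by
        have h1 := tsize_decC a; simp only [tsize] at hsz; omega
      have hszb : tsize (decC b) ≤ Sz := by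
        have h1 := tsize_decC b; simp only [tsize] at hsz; omega
      rcases hcase with ⟨ha, hb⟩ | ⟨ha, ha'⟩ | ⟨ha, ha'⟩
      · obtain ⟨hdeca, hnga⟩ := dec_spec a
        obtain ⟨hdecb, hngb⟩ := dec_spec b
        have ha' : RT M ur vr u v k' (wApp (decW a) (decC a))
            (wApp (decW a) (renameT σ (decC a))) := by
          rw [← renameT_wApp, hdeca]; exact ha
        have hb' : RT M ur vr u v k' (wApp (decW b) (decC b))
            (wApp (decW b) (renameT σ (decC b))) := by
          rw [← renameT_wApp, hdecb]; exact hb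
        have hva : varListT (decC a) = varListT a :=
          (varListT_wApp (decW a) (decC a)).symm.trans (congrArg varListT hdeca)
        have hvb : varListT (decC b) = varListT b :=
          (varListT_wApp (decW b) (decC b)).symm.trans (congrArg varListT hdecb)
        simp only [varListT, List.mem_append] at hi
        rcases hi with hi | hi
        · exact IH (decC a) hsza hnga _ _ _ ha' i (by rw [hva]; exact hi)
        · exact IH (decC b) hszb hngb _ _ _ hb' i (by rw [hvb]; exact hi)
      · -- twist: impossible
        have h2 := RT_rename σ ha
        rw [renameT_wApp] at h2
        simp only [renameT] at h2
        have h3 := RT_trans hn (RT_symm ha') h2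
        exact absurd (RT_inv_al2 h3).1.symm hn
      · have h2 := RT_rename σ ha
        rw [renameT_wApp] at h2
        simp only [renameT] at h2
        have h3 := RT_trans hn (RT_symm ha') h2
        exact absurd (RT_inv_al2 h3).1 hn

end RTMore
section Final

variable {N M : ℕ} {ur vr : Fin M → List (Fin N)} {u v : List (Fin N)}

theorem provT_wApp_congr {n} {s t : TmT N n} (h : ProvT M ur vr u v s t) :
    ∀ w : List (Fin N), ProvT M ur vr u v (wApp w s) (wApp w t) := by
  intro w
  induction w with
  | nil => exact h
  | cons x w ih => rw [wApp_cons, wApp_cons]; exact .congg x ih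

theorem monProv_provT {a b : List (Fin N)} (h : MonProv ur vr a b) (u v : List (Fin N)) :
    ∀ {n} (t : TmT N n), ProvT M ur vr u v (wApp a t) (wApp b t) := by
  induction h with
  | of i => exact fun t => .axu i t
  | refl w => exact fun t => .refl _
  | symm _ ih => exact fun t => .symm (ih t)
  | trans _ _ ih1 ih2 => exact fun t => .trans (ih1 t) (ih2 t)
  | mul _ _ ih1 ih2 =>
    intro n t
    rw [wApp_append, wApp_append]
    exact .trans (ih1 _) (provT_wApp_congr (ih2 t) _)

end Final

/-- The theory `T` is rigid if and only if the monoid presentation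
`⟨G | ur i = vr i (i : Fin M)⟩` does not prove `u = v`. -/
theorem rigid_iff_not_word_problem {N M : ℕ} (ur vr : Fin M → List (Fin N))
    (u v : List (Fin N)) :
    RigidT M ur vr u v ↔ ¬ MonProv ur vr u v := by
  constructor
  · intro hr hmp
    set t0 : TmT N 2 := .m (wApp u (.al (.var 0))) (.var 1) with ht0
    have hlin : LinRegT t0 := by
      intro i
      have hv : varListT t0 = [0, 1] := by
        rw [ht0]
        show varListT (wApp u (.al (.var 0))) ++ varListT (.var 1) = [0, 1]
        rw [varListT_wApp]
        rfl
      rw [hv]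
      fin_cases i <;> rfl
    set σ : Equiv.Perm (Fin 2) := Equiv.swap 0 1 with hσ
    have hre : renameT σ t0 = .m (wApp u (.al (.var 1))) (.var 0) := by
      rw [ht0]
      show TmT.m (renameT σ (wApp u (.al (.var 0)))) (.var (σ 1)) = _
      rw [renameT_wApp, hσ]
      simp [renameT, Equiv.swap_apply_left, Equiv.swap_apply_right]
    have hprov : ProvT M ur vr u v t0 (renameT σ t0) := by
      rw [hre, ht0]
      exact .trans (.axm (.var 0) (.var 1))
        (.congm (monProv_provT hmp.symm u v (.al (.var 1))) (.refl (.var 0)))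
    have h1 := hr 2 t0 hlin σ hprov
    have h2 : σ 0 = (1 : Equiv.Perm (Fin 2)) 0 := by rw [h1]
    rw [hσ] at h2
    simp [Equiv.swap_apply_left] at h2
  · intro hn n t hlin σ hprov
    obtain ⟨k, hR⟩ := provT_RT hn hprov
    apply Equiv.ext
    intro i
    obtain ⟨hdec, hng⟩ := dec_spec t
    have hR' : RT M ur vr u v k (wApp (decW t) (decC t))
        (wApp (decW t) (renameT σ (decC t))) := by
      rw [← renameT_wApp, hdec]
      exact hR
    have hi : i ∈ varListT (decC t) := by
      have hv : varListT (decC t) = varListT t :=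
        (varListT_wApp _ _).symm.trans (congrArg varListT hdec)
      rw [hv]
      have hc := hlin i
      exact List.count_pos_iff.mp (by omega)
    have := RT_fix hn σ (tsize (decC t)) (decC t) le_rfl hng (decW t) (decW t) k hR' i hi
    simpa using this
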